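/- Let A, B, C be n×n real symmetric positive definite matrices. Then for every k with 1 ≤ k ≤ n, λ_1(A,C)·λ_k(C,B) ≤ λ_k(A,B) ≤ λ_n(A,C)·λ_k(C,B). -/

import Mathlib

open Matrix

/-- The Euclidean norm of a vector. -/
noncomputable def enorm {m : Type*} [Fintype m] (v : m → ℝ) : ℝ :=
  Real.sqrt (∑ i, (v i) ^ 2)

/-- The `k`-th smallest generalized eigenvalue (counted with multiplicity) of the
symmetric pencil `(A, B)` with `B` positive definite, i.e. the `k`-th smallest root of
`det (A - λ B) = 0`.  It is defined as the `k`-th smallest eigenvalue of the Hermitian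
matrix `√(B⁻¹) * A * √(B⁻¹)`, which is similar to `B⁻¹ * A`.  Junk value `0` is returned
if `A` is not symmetric or `B` is not positive definite. -/
noncomputable def genEig {m : Type*} [Fintype m] [DecidableEq m]
    (A B : Matrix m m ℝ) (k : Fin (Fintype.card m)) : ℝ :=
  letI := Classical.propDecidable
  if h : A.IsHermitian ∧ B.PosDef then
    let S : Matrix m m ℝ := (h.2.inv).posSemidef.1.eigenvectorUnitary.1 *
      diagonal ((RCLike.ofReal : ℝ → ℝ) ∘ Real.sqrt ∘ (h.2.inv).posSemidef.1.eigenvalues) *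
      (star (h.2.inv).posSemidef.1.eigenvectorUnitary : Matrix m m ℝ)
    have hS : S.IsHermitian := by
      show IsHermitian (_ * _ * (star (h.2.inv).posSemidef.1.eigenvectorUnitary : Matrix m m ℝ))
      rw [star_eq_conjTranspose]
      exact isHermitian_mul_mul_conjTranspose _ (isHermitian_diagonal _)
    have hC : (S * A * S).IsHermitian := by
      clear_value S
      show (S * A * S)ᴴ = S * A * S
      rw [conjTranspose_mul, conjTranspose_mul, hS.eq, h.1.eq, Matrix.mul_assoc]
    let f : Fin (Fintype.card m) → ℝ := hC.eigenvalues₀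
    f (Tuple.sort f k)
  else 0

/-- The `k`-th smallest generalized eigenvalue of a pencil of `n × n` matrices,
indexed by `Fin n`.  `genEigFin A B 0` is the smallest one, `λ_1(A,B)`, and
`genEigFin A B (Fin.last _)` is the largest one, `λ_n(A,B)`. -/
noncomputable def genEigFin {n : ℕ} (A B : Matrix (Fin n) (Fin n) ℝ) (k : Fin n) : ℝ :=
  genEig A B (Fin.cast (Fintype.card_fin n).symm k)

/-- The (row-sum) lumping operator: `lump B` is the diagonal matrix whose `i`-th
diagonal entry is the sum of the absolute values of the entries of the `i`-th row of `B`. -/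
noncomputable def lump {m : Type*} [Fintype m] [DecidableEq m]
    (B : Matrix m m ℝ) : Matrix m m ℝ :=
  Matrix.diagonal fun i => ∑ j, |B i j|

/-- The banded part `D_i` of a matrix: it keeps all sub- and super-diagonals of index
smaller than `i` (i.e. the entries with `|j - k| < i`) and sets the rest to zero. -/
def diagBand {n : ℕ} (B : Matrix (Fin n) (Fin n) ℝ) (i : ℕ) : Matrix (Fin n) (Fin n) ℝ :=
  Matrix.of fun j k => if |((j : ℕ) : ℤ) - ((k : ℕ) : ℤ)| < (i : ℤ) then B j k else 0

/-- The lumped preconditioner `P_i = D_i + 𝓛(R_i)` where `B = D_i + R_i`, `D_i` being the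
banded part of `B` of bandwidth `i` and `R_i` the remainder. -/
noncomputable def precond {n : ℕ} (B : Matrix (Fin n) (Fin n) ℝ) (i : ℕ) :
    Matrix (Fin n) (Fin n) ℝ :=
  diagBand B i + lump (B - diagBand B i)



section Aux
open Matrix
set_option linter.unusedSectionVars false

variable {m : Type*} [Fintype m] [DecidableEq m]


noncomputable def sortedEig {M : Matrix m m ℝ} (hM : M.IsHermitian)
    (k : Fin (Fintype.card m)) : ℝ :=
  hM.eigenvalues₀ (Tuple.sort hM.eigenvalues₀ k)

lemma monotone_sortedEig {M : Matrix m m ℝ} (hM : M.IsHermitian) :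
    Monotone (sortedEig hM) := Tuple.monotone_sort hM.eigenvalues₀

lemma exists_sorted_eigenbasis {M : Matrix m m ℝ} (hM : M.IsHermitian) :
    ∃ v : Fin (Fintype.card m) → EuclideanSpace ℝ m, Orthonormal ℝ v ∧
      (∀ i, M *ᵥ v i = sortedEig hM i • v i) ∧
      Submodule.span ℝ (Set.range v) = ⊤ := by
  set e : Fin (Fintype.card m) ≃ m := Fintype.equivOfCardEq (Fintype.card_fin _) with he
  set σ := Tuple.sort hM.eigenvalues₀ with hσ
  refine ⟨fun i => hM.eigenvectorBasis (e (σ i)), ?_, ?_, ?_⟩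
  · exact hM.eigenvectorBasis.orthonormal.comp _ ((e.injective).comp σ.injective)
  · intro i
    have h1 := hM.mulVec_eigenvectorBasis (e (σ i))
    have h2 : hM.eigenvalues (e (σ i)) = sortedEig hM i := by
      rw [Matrix.IsHermitian.eigenvalues, ← he, Equiv.symm_apply_apply]
      rfl
    exact h2 ▸ h1
  · have hsurj : Function.Surjective (fun i => e (σ i)) :=
      e.surjective.comp σ.surjective
    have h3 : (Set.range fun i => hM.eigenvectorBasis (e (σ i)))
        = Set.range hM.eigenvectorBasis := by
      have : (fun i => hM.eigenvectorBasis (e (σ i)))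
          = hM.eigenvectorBasis ∘ (fun i => e (σ i)) := rfl
      rw [this, Set.range_comp, hsurj.range_eq, Set.image_univ]
    rw [h3, ← hM.eigenvectorBasis.coe_toBasis, hM.eigenvectorBasis.toBasis.span_eq]

lemma dotE (x y : EuclideanSpace ℝ m) : x ⬝ᵥ y = inner ℝ x y := by
  simp [dotProduct, PiLp.inner_apply, mul_comm]

lemma span_quad {ι : Type*} [Fintype ι] (M : Matrix m m ℝ)
    (u : ι → EuclideanSpace ℝ m) (hu : Orthonormal ℝ u) (μ : ι → ℝ)
    (hμ : ∀ i, M *ᵥ u i = μ i • u i) (x : EuclideanSpace ℝ m)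
    (hx : x ∈ Submodule.span ℝ (Set.range u)) :
    ∃ a : ι → ℝ, x ⬝ᵥ x = ∑ i, a i ^ 2 ∧ x ⬝ᵥ (M *ᵥ x) = ∑ i, μ i * a i ^ 2 := by
  obtain ⟨a, ha⟩ := (Submodule.mem_span_range_iff_exists_fun ℝ).1 hx
  refine ⟨a, ?_, ?_⟩
  · rw [dotE, ← ha, hu.inner_sum]
    simp [pow_two]
  · have hmv : M *ᵥ x = (∑ i, (μ i * a i) • u i : EuclideanSpace ℝ m) := by
      rw [← ha]
      simp only [WithLp.ofLp_sum, WithLp.ofLp_smul]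
      show M.mulVecLin (∑ i, a i • (u i).ofLp) = _
      rw [map_sum]
      congr 1; funext i
      rw [LinearMap.map_smul]
      show a i • (M *ᵥ u i) = _
      rw [hμ i, smul_smul, mul_comm]
    rw [dotE, hmv, ← ha, hu.inner_sum]
    simp only [RCLike.star_def, conj_trivial]
    congr 1; funext i; ring

lemma exists_inter (v w : Fin (Fintype.card m) → EuclideanSpace ℝ m)
    (hv : Orthonormal ℝ v) (hw : Orthonormal ℝ w) (k : Fin (Fintype.card m)) :
    ∃ x : EuclideanSpace ℝ m, x ≠ 0 ∧
      x ∈ Submodule.span ℝ (Set.range (fun i : {i // i ≤ k} => v i)) ∧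
      x ∈ Submodule.span ℝ (Set.range (fun i : {i // k ≤ i} => w i)) := by
  have hliv : LinearIndependent ℝ (fun i : {i // i ≤ k} => v i) :=
    (hv.comp _ Subtype.val_injective).linearIndependent
  have hliw : LinearIndependent ℝ (fun i : {i // k ≤ i} => w i) :=
    (hw.comp _ Subtype.val_injective).linearIndependent
  have hfV : Module.finrank ℝ
      (Submodule.span ℝ (Set.range (fun i : {i // i ≤ k} => v i))) = (k : ℕ) + 1 := by
    rw [finrank_span_eq_card hliv, Fintype.card_subtype]
    have : Finset.filter (fun x => x ≤ k) Finset.univ = Finset.Iic k := by ext; simp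
    rw [this, Fin.card_Iic]
  have hfW : Module.finrank ℝ
      (Submodule.span ℝ (Set.range (fun i : {i // k ≤ i} => w i))) = Fintype.card m - (k : ℕ) := by
    rw [finrank_span_eq_card hliw, Fintype.card_subtype]
    have : Finset.filter (fun x => k ≤ x) Finset.univ = Finset.Ici k := by ext; simp
    rw [this, Fin.card_Ici]
  have hsum := Submodule.finrank_sup_add_finrank_inf_eq
    (Submodule.span ℝ (Set.range (fun i : {i // i ≤ k} => v i)))
    (Submodule.span ℝ (Set.range (fun i : {i // k ≤ i} => w i)))
  have hle : Module.finrank ℝ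
      ↥(Submodule.span ℝ (Set.range (fun i : {i // i ≤ k} => v i)) ⊔
        Submodule.span ℝ (Set.range (fun i : {i // k ≤ i} => w i))) ≤ Fintype.card m := by
    have := Submodule.finrank_le
      (Submodule.span ℝ (Set.range (fun i : {i // i ≤ k} => v i)) ⊔
        Submodule.span ℝ (Set.range (fun i : {i // k ≤ i} => w i)))
    rwa [finrank_euclideanSpace] at this
  have hk : (k : ℕ) < Fintype.card m := k.isLt
  have hpos : 0 < Module.finrank ℝ
      ↥(Submodule.span ℝ (Set.range (fun i : {i // i ≤ k} => v i)) ⊓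
        Submodule.span ℝ (Set.range (fun i : {i // k ≤ i} => w i))) := by
    rw [hfV, hfW] at hsum
    omega
  have hne : Submodule.span ℝ (Set.range (fun i : {i // i ≤ k} => v i)) ⊓
      Submodule.span ℝ (Set.range (fun i : {i // k ≤ i} => w i)) ≠ ⊥ := by
    intro hbot
    rw [hbot, finrank_bot] at hpos
    exact lt_irrefl 0 hpos
  obtain ⟨x, hx, hx0⟩ := Submodule.exists_mem_ne_zero_of_ne_bot hne
  exact ⟨x, hx0, hx.1, hx.2⟩

lemma quad_le_span {M : Matrix m m ℝ} (hM : M.IsHermitian) (k : Fin (Fintype.card m))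
    (v : Fin (Fintype.card m) → EuclideanSpace ℝ m) (hv : Orthonormal ℝ v)
    (hev : ∀ i, M *ᵥ v i = sortedEig hM i • v i) (x : EuclideanSpace ℝ m)
    (hx : x ∈ Submodule.span ℝ (Set.range (fun i : {i // i ≤ k} => v i))) :
    x ⬝ᵥ (M *ᵥ x) ≤ sortedEig hM k * (x ⬝ᵥ x) := by
  obtain ⟨a, h1, h2⟩ := span_quad M (fun i : {i // i ≤ k} => v i)
    (hv.comp _ Subtype.val_injective) (fun i => sortedEig hM i)
    (fun i => hev i) x hx
  rw [h1, h2, Finset.mul_sum]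
  refine Finset.sum_le_sum fun i _ => ?_
  exact mul_le_mul_of_nonneg_right (monotone_sortedEig hM i.2) (sq_nonneg _)

lemma le_quad_span {M : Matrix m m ℝ} (hM : M.IsHermitian) (k : Fin (Fintype.card m))
    (w : Fin (Fintype.card m) → EuclideanSpace ℝ m) (hw : Orthonormal ℝ w)
    (hew : ∀ i, M *ᵥ w i = sortedEig hM i • w i) (x : EuclideanSpace ℝ m)
    (hx : x ∈ Submodule.span ℝ (Set.range (fun i : {i // k ≤ i} => w i))) :
    sortedEig hM k * (x ⬝ᵥ x) ≤ x ⬝ᵥ (M *ᵥ x) := by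
  obtain ⟨a, h1, h2⟩ := span_quad M (fun i : {i // k ≤ i} => w i)
    (hw.comp _ Subtype.val_injective) (fun i => sortedEig hM i)
    (fun i => hew i) x hx
  rw [h1, h2, Finset.mul_sum]
  refine Finset.sum_le_sum fun i _ => ?_
  exact mul_le_mul_of_nonneg_right (monotone_sortedEig hM i.2) (sq_nonneg _)

lemma dot_self_pos {x : EuclideanSpace ℝ m} (hx : x ≠ 0) : 0 < x ⬝ᵥ x := by
  have hx' : x.ofLp ≠ 0 := by simpa using hx
  have h := dotProduct_star_self_pos_iff.mpr hx'
  simpa using h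

/-- Core comparison lemma, lower bound form. -/
lemma le_sortedEig_core {M N : Matrix m m ℝ} (hM : M.IsHermitian) (hN : N.IsHermitian)
    {c : ℝ} (hc : 0 ≤ c) (h : ∀ x : m → ℝ, c * (x ⬝ᵥ (N *ᵥ x)) ≤ x ⬝ᵥ (M *ᵥ x))
    (k : Fin (Fintype.card m)) : c * sortedEig hN k ≤ sortedEig hM k := by
  obtain ⟨v, hv, hev, -⟩ := exists_sorted_eigenbasis hM
  obtain ⟨w, hw, hew, -⟩ := exists_sorted_eigenbasis hN
  obtain ⟨x, hx0, hxV, hxW⟩ := exists_inter v w hv hw k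
  have hs : 0 < x ⬝ᵥ x := dot_self_pos hx0
  have b1 : x ⬝ᵥ (M *ᵥ x) ≤ sortedEig hM k * (x ⬝ᵥ x) := quad_le_span hM k v hv hev x hxV
  have b2 : sortedEig hN k * (x ⬝ᵥ x) ≤ x ⬝ᵥ (N *ᵥ x) := le_quad_span hN k w hw hew x hxW
  have chain : (c * sortedEig hN k) * (x ⬝ᵥ x) ≤ sortedEig hM k * (x ⬝ᵥ x) := by
    calc (c * sortedEig hN k) * (x ⬝ᵥ x) = c * (sortedEig hN k * (x ⬝ᵥ x)) := by ring
    _ ≤ c * (x ⬝ᵥ (N *ᵥ x)) := mul_le_mul_of_nonneg_left b2 hc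
    _ ≤ x ⬝ᵥ (M *ᵥ x) := h x
    _ ≤ sortedEig hM k * (x ⬝ᵥ x) := b1
  exact le_of_mul_le_mul_right chain hs

/-- Core comparison lemma, upper bound form. -/
lemma sortedEig_le_core {M N : Matrix m m ℝ} (hM : M.IsHermitian) (hN : N.IsHermitian)
    {d : ℝ} (hd : 0 ≤ d) (h : ∀ x : m → ℝ, x ⬝ᵥ (M *ᵥ x) ≤ d * (x ⬝ᵥ (N *ᵥ x)))
    (k : Fin (Fintype.card m)) : sortedEig hM k ≤ d * sortedEig hN k := by
  obtain ⟨v, hv, hev, -⟩ := exists_sorted_eigenbasis hM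
  obtain ⟨w, hw, hew, -⟩ := exists_sorted_eigenbasis hN
  obtain ⟨x, hx0, hxW, hxV⟩ := exists_inter w v hw hv k
  have hs : 0 < x ⬝ᵥ x := dot_self_pos hx0
  have b1 : sortedEig hM k * (x ⬝ᵥ x) ≤ x ⬝ᵥ (M *ᵥ x) := le_quad_span hM k v hv hev x hxV
  have b2 : x ⬝ᵥ (N *ᵥ x) ≤ sortedEig hN k * (x ⬝ᵥ x) := quad_le_span hN k w hw hew x hxW
  have chain : sortedEig hM k * (x ⬝ᵥ x) ≤ (d * sortedEig hN k) * (x ⬝ᵥ x) := by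
    calc sortedEig hM k * (x ⬝ᵥ x) ≤ x ⬝ᵥ (M *ᵥ x) := b1
    _ ≤ d * (x ⬝ᵥ (N *ᵥ x)) := h x
    _ ≤ d * (sortedEig hN k * (x ⬝ᵥ x)) := mul_le_mul_of_nonneg_left b2 hd
    _ = (d * sortedEig hN k) * (x ⬝ᵥ x) := by ring
  exact le_of_mul_le_mul_right chain hs

lemma le_quad_full {M : Matrix m m ℝ} (hM : M.IsHermitian) (h0 : 0 < Fintype.card m)
    (x : EuclideanSpace ℝ m) :
    sortedEig hM ⟨0, h0⟩ * (x ⬝ᵥ x) ≤ x ⬝ᵥ (M *ᵥ x) := by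
  obtain ⟨v, hv, hev, hspan⟩ := exists_sorted_eigenbasis hM
  have hx : x ∈ Submodule.span ℝ (Set.range v) := by rw [hspan]; trivial
  obtain ⟨a, h1, h2⟩ := span_quad M v hv _ hev x hx
  rw [h1, h2, Finset.mul_sum]
  refine Finset.sum_le_sum fun i _ => ?_
  refine mul_le_mul_of_nonneg_right (monotone_sortedEig hM ?_) (sq_nonneg _)
  exact Fin.mk_le_of_le_val (Nat.zero_le _)

lemma quad_le_full {M : Matrix m m ℝ} (hM : M.IsHermitian) (h0 : 0 < Fintype.card m)
    (x : EuclideanSpace ℝ m) :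
    x ⬝ᵥ (M *ᵥ x) ≤ sortedEig hM ⟨Fintype.card m - 1, by omega⟩ * (x ⬝ᵥ x) := by
  obtain ⟨v, hv, hev, hspan⟩ := exists_sorted_eigenbasis hM
  have hx : x ∈ Submodule.span ℝ (Set.range v) := by rw [hspan]; trivial
  obtain ⟨a, h1, h2⟩ := span_quad M v hv _ hev x hx
  rw [h1, h2, Finset.mul_sum]
  refine Finset.sum_le_sum fun i _ => ?_
  refine mul_le_mul_of_nonneg_right (monotone_sortedEig hM ?_) (sq_nonneg _)
  rw [Fin.le_def]
  have := i.isLt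
  simp only []
  omega

lemma sortedEig_nonneg {M : Matrix m m ℝ} (hP : M.PosSemidef) (k : Fin (Fintype.card m)) :
    0 ≤ sortedEig hP.1 k := by
  obtain ⟨v, hv, hev, -⟩ := exists_sorted_eigenbasis hP.1
  have h2 : (0:ℝ) ≤ (v k) ⬝ᵥ (M *ᵥ v k) := by simpa using hP.dotProduct_mulVec_nonneg (v k)
  rw [hev k, dotProduct_smul, smul_eq_mul] at h2
  have hs : 0 < (v k) ⬝ᵥ (v k) := dot_self_pos (hv.ne_zero k)
  by_contra hneg
  push_neg at hneg
  nlinarith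


noncomputable def sqInv {B : Matrix m m ℝ} (h : B.PosDef) : Matrix m m ℝ :=
  (h.inv).posSemidef.1.eigenvectorUnitary.1 *
    diagonal ((RCLike.ofReal : ℝ → ℝ) ∘ Real.sqrt ∘ (h.inv).posSemidef.1.eigenvalues) *
    (star (h.inv).posSemidef.1.eigenvectorUnitary : Matrix m m ℝ)

lemma sqInv_herm {B : Matrix m m ℝ} (h : B.PosDef) : (sqInv h).IsHermitian := by
  show IsHermitian (_ * _ * (star (h.inv).posSemidef.1.eigenvectorUnitary : Matrix m m ℝ))
  rw [star_eq_conjTranspose]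
  exact isHermitian_mul_mul_conjTranspose _ (isHermitian_diagonal _)

lemma sqInv_mul_self {B : Matrix m m ℝ} (h : B.PosDef) : sqInv h * sqInv h = B⁻¹ := by
  have hP := (h.inv).posSemidef
  have hU : (star hP.1.eigenvectorUnitary : Matrix m m ℝ) * hP.1.eigenvectorUnitary.1 = 1 :=
    Unitary.coe_star_mul_self _
  have hD : diagonal ((RCLike.ofReal : ℝ → ℝ) ∘ Real.sqrt ∘ hP.1.eigenvalues) *
      diagonal ((RCLike.ofReal : ℝ → ℝ) ∘ Real.sqrt ∘ hP.1.eigenvalues) =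
      diagonal ((RCLike.ofReal : ℝ → ℝ) ∘ hP.1.eigenvalues) := by
    rw [diagonal_mul_diagonal]; congr 1; funext i
    simp [Real.mul_self_sqrt (hP.eigenvalues_nonneg i)]
  conv_rhs => rw [hP.1.spectral_theorem, Unitary.conjStarAlgAut_apply]
  unfold sqInv
  calc _ = hP.1.eigenvectorUnitary.1 *
      (diagonal ((RCLike.ofReal : ℝ → ℝ) ∘ Real.sqrt ∘ hP.1.eigenvalues) *
      ((star hP.1.eigenvectorUnitary : Matrix m m ℝ) * hP.1.eigenvectorUnitary.1) *
      diagonal ((RCLike.ofReal : ℝ → ℝ) ∘ Real.sqrt ∘ hP.1.eigenvalues)) *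
      (star hP.1.eigenvectorUnitary : Matrix m m ℝ) := by simp only [Matrix.mul_assoc]
  _ = _ := by rw [hU, Matrix.mul_one, hD]

lemma herm_SAS {A B : Matrix m m ℝ} (h1 : A.IsHermitian) (h2 : B.PosDef) :
    (sqInv h2 * A * sqInv h2).IsHermitian := by
  have hS := sqInv_herm h2
  show _ᴴ = _
  rw [conjTranspose_mul, conjTranspose_mul, hS.eq, h1.eq, Matrix.mul_assoc]

lemma genEig_eq {A B : Matrix m m ℝ}
    (h1 : A.IsHermitian) (h2 : B.PosDef) (k : Fin (Fintype.card m)) :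
    genEig A B k
      = @sortedEig m _ (fun a b => Classical.propDecidable (a = b)) _
          (@herm_SAS m _ (fun a b => Classical.propDecidable (a = b)) A B h1 h2) k := by
  rw [genEig, dif_pos ⟨h1, h2⟩]
  rfl

lemma psd_inv_conj {S : Matrix m m ℝ} (hS : S.IsHermitian) {Q : Matrix m m ℝ}
    (h : Q.PosSemidef) : PosSemidef (S⁻¹ * Q * S⁻¹) := by
  have h2 := h.mul_mul_conjTranspose_same S⁻¹
  rwa [conjTranspose_nonsing_inv, hS.eq] at h2

lemma star_id (x : m → ℝ) : star x = x := by
  funext i; simp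

lemma main_aux {A B C : Matrix m m ℝ}
    (hA : A.PosDef) (hB : B.PosDef) (hC : C.PosDef) (h0 : 0 < Fintype.card m)
    (k : Fin (Fintype.card m)) :
    sortedEig (herm_SAS hA.1 hC) ⟨0, h0⟩ * sortedEig (herm_SAS hC.1 hB) k
        ≤ sortedEig (herm_SAS hA.1 hB) k ∧
      sortedEig (herm_SAS hA.1 hB) k
        ≤ sortedEig (herm_SAS hA.1 hC) ⟨Fintype.card m - 1, by omega⟩
            * sortedEig (herm_SAS hC.1 hB) k := by
  have hSB : (sqInv hB).IsHermitian :=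
    sqInv_herm hB
  have hSC : (sqInv hC).IsHermitian :=
    sqInv_herm hC
  set SB := sqInv hB with hSBdef
  set SC := sqInv hC with hSCdef
  have hSCC : SC * SC = C⁻¹ := sqInv_mul_self hC
  have hdetC : IsUnit C.det := isUnit_iff_ne_zero.mpr hC.det_pos.ne'
  have hdetSC : IsUnit SC.det := by
    have hm : SC.det * SC.det = C⁻¹.det := by rw [← Matrix.det_mul, hSCC]
    have hCinv : (0:ℝ) < C⁻¹.det := (hC.inv).det_pos
    refine isUnit_iff_ne_zero.mpr fun h => ?_
    rw [h, mul_zero] at hm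
    exact hCinv.ne hm
  set c := sortedEig (herm_SAS hA.1 hC) ⟨0, h0⟩ with hc
  set d := sortedEig (herm_SAS hA.1 hC) ⟨Fintype.card m - 1, by omega⟩ with hd
  have hPSD_P : (SC * A * SC).PosSemidef := by
    have h2 := hA.posSemidef.mul_mul_conjTranspose_same SC
    rwa [hSC.eq] at h2
  have hc0 : 0 ≤ c := sortedEig_nonneg hPSD_P _
  have hd0 : 0 ≤ d := sortedEig_nonneg hPSD_P _
  have hsmul_herm : ∀ t : ℝ, ((t • (1 : Matrix m m ℝ))).IsHermitian := by
    intro t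
    show _ᴴ = _
    rw [conjTranspose_smul, conjTranspose_one, star_trivial]
  have hQ1 : (SC * A * SC - c • 1).PosSemidef := by
    refine PosSemidef.of_dotProduct_mulVec_nonneg ((herm_SAS hA.1 hC).sub (hsmul_herm c)) fun x => ?_
    have hb := le_quad_full (herm_SAS hA.1 hC) h0 (WithLp.toLp 2 x)
    simp only [WithLp.ofLp_toLp] at hb
    rw [star_id, sub_mulVec, dotProduct_sub, smul_mulVec, one_mulVec,
      dotProduct_smul, smul_eq_mul]
    linarith
  have hQ1' : (d • 1 - SC * A * SC).PosSemidef := by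
    refine PosSemidef.of_dotProduct_mulVec_nonneg ((hsmul_herm d).sub (herm_SAS hA.1 hC)) fun x => ?_
    have hb := quad_le_full (herm_SAS hA.1 hC) h0 (WithLp.toLp 2 x)
    simp only [WithLp.ofLp_toLp] at hb
    rw [star_id, sub_mulVec, dotProduct_sub, smul_mulVec, one_mulVec,
      dotProduct_smul, smul_eq_mul]
    linarith
  have eA : SC⁻¹ * (SC * A * SC) * SC⁻¹ = A := by
    rw [show SC * A * SC = SC * (A * SC) from Matrix.mul_assoc _ _ _,
      ← Matrix.mul_assoc, Matrix.nonsing_inv_mul _ hdetSC, Matrix.one_mul,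
      Matrix.mul_assoc, Matrix.mul_nonsing_inv _ hdetSC, Matrix.mul_one]
  have eI : ∀ t : ℝ, SC⁻¹ * (t • (1 : Matrix m m ℝ)) * SC⁻¹ = t • C := by
    intro t
    rw [Matrix.mul_smul, Matrix.mul_one, Matrix.smul_mul]
    congr 1
    calc SC⁻¹ * SC⁻¹ = (SC * SC)⁻¹ := (Matrix.mul_inv_rev SC SC).symm
    _ = (C⁻¹)⁻¹ := by rw [hSCC]
    _ = C := Matrix.nonsing_inv_nonsing_inv _ hdetC
  have hQ2 : (A - c • C).PosSemidef := by
    have h2 := psd_inv_conj hSC hQ1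
    have e : SC⁻¹ * (SC * A * SC - c • 1) * SC⁻¹ = A - c • C := by
      rw [Matrix.mul_sub, Matrix.sub_mul, eA, eI]
    rwa [e] at h2
  have hQ2' : (d • C - A).PosSemidef := by
    have h2 := psd_inv_conj hSC hQ1'
    have e : SC⁻¹ * (d • 1 - SC * A * SC) * SC⁻¹ = d • C - A := by
      rw [Matrix.mul_sub, Matrix.sub_mul, eA, eI]
    rwa [e] at h2
  have hQ3 : (SB * A * SB - c • (SB * C * SB)).PosSemidef := by
    have h2 := hQ2.mul_mul_conjTranspose_same SB
    rw [hSB.eq] at h2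
    have e : SB * (A - c • C) * SB = SB * A * SB - c • (SB * C * SB) := by
      rw [Matrix.mul_sub, Matrix.sub_mul, Matrix.mul_smul, Matrix.smul_mul]
    rwa [e] at h2
  have hQ3' : (d • (SB * C * SB) - SB * A * SB).PosSemidef := by
    have h2 := hQ2'.mul_mul_conjTranspose_same SB
    rw [hSB.eq] at h2
    have e : SB * (d • C - A) * SB = d • (SB * C * SB) - SB * A * SB := by
      rw [Matrix.mul_sub, Matrix.sub_mul, Matrix.mul_smul, Matrix.smul_mul]
    rwa [e] at h2
  have hq : ∀ x : m → ℝ, c * (x ⬝ᵥ ((SB * C * SB) *ᵥ x)) ≤ x ⬝ᵥ ((SB * A * SB) *ᵥ x) := by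
    intro x
    have h := hQ3.dotProduct_mulVec_nonneg x
    rw [star_id, sub_mulVec, dotProduct_sub, smul_mulVec, dotProduct_smul,
      smul_eq_mul] at h
    linarith
  have hq' : ∀ x : m → ℝ, x ⬝ᵥ ((SB * A * SB) *ᵥ x) ≤ d * (x ⬝ᵥ ((SB * C * SB) *ᵥ x)) := by
    intro x
    have h := hQ3'.dotProduct_mulVec_nonneg x
    rw [star_id, sub_mulVec, dotProduct_sub, smul_mulVec, dotProduct_smul,
      smul_eq_mul] at h
    linarith
  exact ⟨le_sortedEig_core (herm_SAS hA.1 hB) (herm_SAS hC.1 hB) hc0 hq k,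
    sortedEig_le_core (herm_SAS hA.1 hB) (herm_SAS hC.1 hB) hd0 hq' k⟩

end Aux

/-- `λ_1(A,C)·λ_k(C,B) ≤ λ_k(A,B) ≤ λ_n(A,C)·λ_k(C,B)`. -/
theorem stmt_2 {n : ℕ} (A B C : Matrix (Fin (n + 1)) (Fin (n + 1)) ℝ)
    (hA : A.PosDef) (hB : B.PosDef) (hC : C.PosDef) :
    ∀ k : Fin (n + 1),
      genEigFin A C 0 * genEigFin C B k ≤ genEigFin A B k ∧
      genEigFin A B k ≤ genEigFin A C (Fin.last n) * genEigFin C B k := by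
  intro k
  have h0 : 0 < Fintype.card (Fin (n + 1)) := by simp
  have key := @main_aux (Fin (n + 1)) _ (fun a b => Classical.propDecidable (a = b))
    A B C hA hB hC h0 (Fin.cast (Fintype.card_fin (n + 1)).symm k)
  have i0 : (Fin.cast (Fintype.card_fin (n + 1)).symm (0 : Fin (n + 1)))
      = (⟨0, h0⟩ : Fin (Fintype.card (Fin (n + 1)))) := by
    ext; simp
  have il : (Fin.cast (Fintype.card_fin (n + 1)).symm (Fin.last n))
      = (⟨Fintype.card (Fin (n + 1)) - 1, by omega⟩ : Fin (Fintype.card (Fin (n + 1)))) := by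
    ext; simp
  simp only [genEigFin]
  rw [genEig_eq hA.1 hB, genEig_eq hC.1 hB, genEig_eq hA.1 hC, genEig_eq hA.1 hC, i0, il]
  exact key
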